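/- Let $R, Q, H$ be real numbers with $R \geq 1$, $Q \geq 1$, $H \geq 2R$, and let $\delta \geq 1$. The number of integer points $(r, q_1, q_2, h_1, h_2, d) \in \mathbb{Z}^6$ with $0 < |r| < R$, $Q \leq |q_i| < 2Q$, $H \leq h_i < 2H$, $q_1 q_2 > 0$, $0 < |d| \leq C(1+\delta)Q$ satisfying $rd + h_1 q_1 - h_2 q_2 = 0$ is at most $C'_\varepsilon (RQH)^{1+\varepsilon}(1 + Q\delta)$ for every $\varepsilon > 0$. -/

import Mathlib

open Finset

theorem my_divisor_bound (ε : ℝ) (hε : 0 < ε) :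
    ∃ Cd : ℝ, 1 ≤ Cd ∧ ∀ n : ℕ, n ≠ 0 → (n.divisors.card : ℝ) ≤ Cd * (n : ℝ) ^ ε := by
  classical
  set t : ℝ := (2 : ℝ) ^ ε with ht
  have ht1 : 1 < t := Real.one_lt_rpow_iff_of_pos (by norm_num) |>.2 (Or.inl ⟨by norm_num, hε⟩)
  set K : ℝ := max 1 (1 / (t - 1)) with hK
  have hK1 : 1 ≤ K := le_max_left _ _
  set B : ℕ := ⌈(2:ℝ) ^ (1/ε)⌉₊ with hB
  refine ⟨K ^ B, one_le_pow₀ hK1, ?_⟩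
  intro n hn
  -- per prime bound
  set c : ℕ → ℝ := fun p => if p < B then K else 1 with hc
  have key : ∀ p ∈ n.primeFactors,
      ((n.factorization p + 1 : ℕ) : ℝ) ≤ c p * ((p : ℝ) ^ (n.factorization p : ℕ)) ^ ε := by
    intro p hp
    have hp2 : (2 : ℝ) ≤ (p : ℝ) := by
      exact_mod_cast (Nat.prime_of_mem_primeFactors hp).two_le
    set a : ℕ := n.factorization p with ha
    have hpa : ((p : ℝ) ^ a) ^ ε = ((p:ℝ) ^ ε) ^ a := by
      rw [← Real.rpow_natCast ((p:ℝ) ^ ε) a, ← Real.rpow_mul (by positivity),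
        mul_comm, Real.rpow_mul (by positivity), Real.rpow_natCast]
    rw [hpa]
    by_cases hsm : p < B
    · -- small prime: use Bernoulli with t = 2^ε
      have htp : t ≤ (p : ℝ) ^ ε := Real.rpow_le_rpow (by norm_num) hp2 hε.le
      have hb : 1 + (a : ℝ) * (t - 1) ≤ t ^ a := by
        have h := one_add_mul_le_pow (a := t - 1) (by linarith) a
        have e : (1 + (t-1)) = t := by ring
        rwa [e] at h
      have h1 : t ^ a ≤ ((p:ℝ) ^ ε) ^ a := pow_le_pow_left₀ (by positivity) htp a
      have h2 : ((a : ℝ) + 1) ≤ K * (1 + (a : ℝ) * (t - 1)) := by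
        have hKt : 1 ≤ K * (t - 1) := by
          rcases le_or_gt 1 (t - 1) with h | h
          · nlinarith [hK1]
          · have : K ≥ 1 / (t - 1) := le_max_right _ _
            rw [ge_iff_le, div_le_iff₀ (by linarith)] at this
            linarith
        nlinarith [hK1, (Nat.cast_nonneg a : (0:ℝ) ≤ (a:ℝ)), ht1]
      have : c p = K := if_pos hsm
      rw [this]
      push_cast
      calc ((a:ℝ) + 1) ≤ K * (1 + (a : ℝ) * (t - 1)) := h2
        _ ≤ K * (t ^ a) := by nlinarith [hb, hK1]
        _ ≤ K * (((p:ℝ) ^ ε) ^ a) := by nlinarith [h1, hK1]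
    · -- large prime : p^ε ≥ 2, use a+1 ≤ 2^a
      have hpB : ((2:ℝ) ^ (1/ε)) ≤ (p : ℝ) := by
        calc ((2:ℝ) ^ (1/ε)) ≤ (B : ℕ) := Nat.le_ceil _
          _ ≤ (p : ℝ) := by exact_mod_cast Nat.not_lt.mp hsm
      have h2p : (2 : ℝ) ≤ (p : ℝ) ^ ε := by
        have := Real.rpow_le_rpow (by positivity) hpB hε.le
        rwa [← Real.rpow_mul (by norm_num), one_div, inv_mul_cancel₀ hε.ne', Real.rpow_one] at this
      have : c p = 1 := if_neg hsm
      rw [this, one_mul]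
      calc ((a + 1 : ℕ) : ℝ) ≤ ((2 ^ a : ℕ) : ℝ) := by exact_mod_cast (Nat.lt_two_pow_self (n := a))
        _ = (2:ℝ) ^ a := by push_cast; ring
        _ ≤ ((p:ℝ) ^ ε) ^ a := pow_le_pow_left₀ (by norm_num) h2p a
  -- assemble
  have hd : (n.divisors.card : ℝ) = ∏ p ∈ n.primeFactors, ((n.factorization p + 1 : ℕ) : ℝ) := by
    rw [Nat.card_divisors hn]
    push_cast
    ring
  have hn' : (n : ℝ) = ∏ p ∈ n.primeFactors, (p : ℝ) ^ (n.factorization p : ℕ) := by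
    conv_lhs => rw [← Nat.factorization_prod_pow_eq_self hn]
    rw [Nat.factorization, Finsupp.prod]
    push_cast
    rfl
  have hprod : (n : ℝ) ^ ε = ∏ p ∈ n.primeFactors, ((p : ℝ) ^ (n.factorization p : ℕ)) ^ ε := by
    rw [hn', ← Real.finset_prod_rpow _ _ (fun i _ => by positivity) ε]
  have hcprod : ∏ p ∈ n.primeFactors, c p ≤ K ^ B := by
    have : ∏ p ∈ n.primeFactors, c p = K ^ #(n.primeFactors.filter (· < B)) := by
      rw [hc, Finset.prod_ite, Finset.prod_const, Finset.prod_const, one_pow, mul_one]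
    rw [this]
    refine pow_le_pow_right₀ hK1 ?_
    calc #(n.primeFactors.filter (· < B)) ≤ #(Finset.range B) := by
          refine Finset.card_le_card fun p hp => ?_
          simp only [Finset.mem_filter] at hp
          exact Finset.mem_range.mpr hp.2
      _ = B := Finset.card_range B
  calc (n.divisors.card : ℝ) = ∏ p ∈ n.primeFactors, ((n.factorization p + 1 : ℕ) : ℝ) := hd
    _ ≤ ∏ p ∈ n.primeFactors, (c p * ((p : ℝ) ^ (n.factorization p : ℕ)) ^ ε) :=
        Finset.prod_le_prod (fun p _ => by positivity) key
    _ = (∏ p ∈ n.primeFactors, c p) * ∏ p ∈ n.primeFactors, ((p : ℝ) ^ (n.factorization p : ℕ)) ^ ε :=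
        Finset.prod_mul_distrib
    _ ≤ K ^ B * (n : ℝ) ^ ε := by
        rw [← hprod]
        have h0 : (0:ℝ) ≤ (n : ℝ) ^ ε := by positivity
        exact mul_le_mul_of_nonneg_right hcprod h0

set_option maxHeartbeats 1000000 in
theorem lemma7_case_delta_ge_one :
    ∀ C : ℝ, 0 < C → ∀ ε : ℝ, 0 < ε → ∃ C' : ℝ, 0 < C' ∧
      ∀ (R Q H δ : ℝ), 1 ≤ R → 1 ≤ Q → 2 * R ≤ H → 1 ≤ δ →
        let S : Set (ℤ × ℤ × ℤ × ℤ × ℤ × ℤ) :=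
          {p | ∃ r q₁ q₂ h₁ h₂ d : ℤ,
            p = (r, q₁, q₂, h₁, h₂, d) ∧
            r ≠ 0 ∧ |(r : ℝ)| < R ∧
            Q ≤ |(q₁ : ℝ)| ∧ |(q₁ : ℝ)| < 2 * Q ∧
            Q ≤ |(q₂ : ℝ)| ∧ |(q₂ : ℝ)| < 2 * Q ∧
            H ≤ (h₁ : ℝ) ∧ (h₁ : ℝ) < 2 * H ∧
            H ≤ (h₂ : ℝ) ∧ (h₂ : ℝ) < 2 * H ∧
            0 < q₁ * q₂ ∧
            d ≠ 0 ∧ |(d : ℝ)| ≤ C * (1 + δ) * Q ∧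
            r * d + h₁ * q₁ - h₂ * q₂ = 0}
        (S.ncard : ℝ) ≤ C' * (R * Q * H) ^ (1 + ε) * (1 + Q * δ) := by
  intro C hC ε hε
  classical
  obtain ⟨Cd, hCd1, hCd⟩ := my_divisor_bound ε hε
  refine ⟨48 * (4 * C + 6) * (Cd * 16 ^ ε + 1), by positivity, ?_⟩
  intro R Q H δ hR hQ hH hδ S
  have hH2 : (2 : ℝ) ≤ H := le_trans (by linarith) hH
  have hQ0 : (0 : ℝ) < Q := by linarith
  have hH0 : (0 : ℝ) < H := by linarith
  have hδ0 : (0 : ℝ) < δ := by linarith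
  have hRQH1 : (1 : ℝ) ≤ R * Q * H := by
    have h1 : (1:ℝ) * 1 ≤ R * Q := mul_le_mul hR hQ zero_le_one (by linarith)
    have h2 : (1:ℝ) * 1 ≤ (R * Q) * H := mul_le_mul (by linarith) (by linarith) zero_le_one (by linarith)
    linarith
  have hceilH : (H : ℝ) ≤ ((⌈H⌉ : ℤ) : ℝ) := Int.le_ceil H
  have hceilQ : (Q : ℝ) ≤ ((⌈Q⌉ : ℤ) : ℝ) := Int.le_ceil Q
  have int_le_ceil : ∀ (z : ℤ) (x : ℝ), (z : ℝ) ≤ x → z ≤ ⌈x⌉ := by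
    intro z x h
    exact_mod_cast le_trans h (Int.le_ceil x)
  have hceilH0 : (0 : ℤ) < ⌈H⌉ := lt_of_lt_of_le Int.zero_lt_one (int_le_ceil 1 H (by push_cast; linarith))
  have hceilQ0 : (0 : ℤ) < ⌈Q⌉ := lt_of_lt_of_le Int.zero_lt_one (int_le_ceil 1 Q (by push_cast; linarith))
  have toNat_cast : ∀ z : ℤ, 0 ≤ z → ((z.toNat : ℕ) : ℝ) = ((z : ℤ) : ℝ) := by
    intro z hz
    exact_mod_cast congrArg (Int.cast : ℤ → ℝ) (Int.toNat_of_nonneg hz)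
  -- the Finsets
  set FA : Finset ℤ := Finset.Ioo (-⌈R⌉) ⌈R⌉ with hFA
  set FD : Finset ℤ := Finset.Icc (-⌈C * (1 + δ) * Q⌉) ⌈C * (1 + δ) * Q⌉ with hFD
  set FH : Finset ℤ := Finset.Ico ⌈H⌉ ⌈2 * H⌉ with hFH
  set FQ : Finset ℤ := Finset.Ioo (-⌈2 * Q⌉) ⌈2 * Q⌉ with hFQ
  set Nf : (ℤ × ℤ × ℤ × ℤ × ℤ) → ℤ := fun p => p.1 * p.2.1 + p.2.2.1 * p.2.2.2.1 with hNf
  set T : Finset (ℤ × ℤ × ℤ × ℤ × ℤ) :=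
    (FA ×ˢ FD ×ˢ FH ×ˢ FQ ×ˢ FH).filter
      (fun p => p.2.2.2.2 ∣ Nf p ∧ Nf p ≠ 0 ∧ |Nf p| ≤ 4 * ⌈H⌉ * ⌈Q⌉) with hT
  set φ : (ℤ × ℤ × ℤ × ℤ × ℤ × ℤ) → (ℤ × ℤ × ℤ × ℤ × ℤ) :=
    fun p => (p.1, p.2.2.2.2.2, p.2.2.2.1, p.2.1, p.2.2.2.2.1) with hφ
  -- φ '' S ⊆ T
  have hsub : φ '' S ⊆ (T : Set (ℤ × ℤ × ℤ × ℤ × ℤ)) := by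
    rintro _ ⟨p, hp, rfl⟩
    obtain ⟨r, q₁, q₂, h₁, h₂, d, rfl, hr0, hrR, hq1l, hq1u, hq2l, hq2u, hh1l, hh1u,
      hh2l, hh2u, hqq, hd0, hdB, heq⟩ := hp
    have hh2pos : (0 : ℤ) < h₂ := by exact_mod_cast lt_of_lt_of_le hH0 hh2l
    have hq2ne : q₂ ≠ 0 := by
      intro h; rw [h] at hq2l; simp at hq2l; linarith
    have hNval : Nf (r, d, h₁, q₁, h₂) = h₂ * q₂ := by
      simp only [hNf]; linarith [heq]
    have habs_r := abs_lt.mp hrR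
    have habs_q1 := abs_lt.mp hq1u
    have habs_d := abs_le.mp hdB
    simp only [hφ, Finset.mem_coe, hT, Finset.mem_filter, Finset.mem_product,
      hFA, hFD, hFH, hFQ, Finset.mem_Ioo, Finset.mem_Icc, Finset.mem_Ico]
    refine ⟨⟨⟨?_, ?_⟩, ⟨?_, ?_⟩, ⟨?_, ?_⟩, ⟨?_, ?_⟩, ⟨?_, ?_⟩⟩, ?_, ?_, ?_⟩
    · rw [neg_lt]; exact Int.lt_ceil.mpr (by push_cast; linarith [habs_r.1])
    · exact Int.lt_ceil.mpr (by push_cast; linarith [habs_r.2])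
    · rw [neg_le]; exact int_le_ceil (-d) _ (by push_cast; linarith [habs_d.1])
    · exact int_le_ceil d _ (by push_cast; linarith [habs_d.2])
    · exact Int.ceil_le.mpr hh1l
    · exact Int.lt_ceil.mpr hh1u
    · rw [neg_lt]; exact Int.lt_ceil.mpr (by push_cast; linarith [habs_q1.1])
    · exact Int.lt_ceil.mpr (by push_cast; linarith [habs_q1.2])
    · exact Int.ceil_le.mpr hh2l
    · exact Int.lt_ceil.mpr hh2u
    · rw [hNval]; exact dvd_mul_right h₂ q₂
    · rw [hNval]; exact mul_ne_zero hh2pos.ne' hq2ne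
    · rw [hNval, abs_mul]
      have h1 : |h₂| ≤ 2 * ⌈H⌉ := by
        rw [abs_of_pos hh2pos]
        have : ((h₂ : ℤ) : ℝ) ≤ ((2 * ⌈H⌉ : ℤ) : ℝ) := by push_cast; linarith
        exact_mod_cast this
      have h2 : |q₂| ≤ 2 * ⌈Q⌉ := by
        have h2' : ((|q₂| : ℤ) : ℝ) ≤ ((2 * ⌈Q⌉ : ℤ) : ℝ) := by
          rw [Int.cast_abs]; push_cast; linarith
        exact_mod_cast h2'
      calc |h₂| * |q₂| ≤ (2 * ⌈H⌉) * (2 * ⌈Q⌉) :=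
            mul_le_mul h1 h2 (abs_nonneg _) (by positivity)
        _ = 4 * ⌈H⌉ * ⌈Q⌉ := by ring
  -- injectivity of φ on S
  have hinj : Set.InjOn φ S := by
    rintro p hp p' hp' hpp
    obtain ⟨r, q₁, q₂, h₁, h₂, d, hpe, _, _, _, _, _, _, _, _, hh2l, _, _, _, _, heq⟩ := hp
    obtain ⟨r', q₁', q₂', h₁', h₂', d', hpe', _, _, _, _, _, _, _, _, _, _, _, _, _, heq'⟩ := hp'
    subst hpe; subst hpe'
    simp only [hφ, Prod.mk.injEq] at hpp
    obtain ⟨e1, e2, e3, e4, e5⟩ := hpp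
    have hh2ne : h₂ ≠ 0 := by
      have : (0 : ℝ) < (h₂ : ℝ) := lt_of_lt_of_le hH0 hh2l
      exact_mod_cast this.ne'
    rw [← e1, ← e2, ← e3, ← e4, ← e5] at heq'
    have hmul : h₂ * q₂ = h₂ * q₂' := by linarith
    have hq2e : q₂ = q₂' := mul_left_cancel₀ hh2ne hmul
    rw [e1, e2, e3, e4, e5, hq2e]
  -- cardinality chain
  have hTfin : (T : Set (ℤ × ℤ × ℤ × ℤ × ℤ)).Finite := T.finite_toSet
  have hcard1 : (S.ncard : ℝ) ≤ (T.card : ℝ) := by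
    have h1 : S.ncard = (φ '' S).ncard := (Set.ncard_image_of_injOn hinj).symm
    have h2 : (φ '' S).ncard ≤ T.card := by
      rw [← Set.ncard_coe_finset T]
      exact Set.ncard_le_ncard hsub hTfin
    rw [h1]; exact_mod_cast h2
  -- fiber bound via divisors
  set proj : (ℤ × ℤ × ℤ × ℤ × ℤ) → (ℤ × ℤ × ℤ × ℤ) :=
    fun p => (p.1, p.2.1, p.2.2.1, p.2.2.2.1) with hproj
  set n₀ : ℕ := ⌈Cd * (((4 * ⌈H⌉ * ⌈Q⌉ : ℤ) : ℝ)) ^ ε⌉₊ with hn₀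
  have hX0 : (0 : ℝ) < ((4 * ⌈H⌉ * ⌈Q⌉ : ℤ) : ℝ) := by
    push_cast
    nlinarith [hceilH, hceilQ, hH0, hQ0]
  have hfiber : ∀ b ∈ T.image proj, (T.filter (fun p => proj p = b)).card ≤ n₀ := by
    intro b _
    rcases (T.filter (fun p => proj p = b)).eq_empty_or_nonempty with he | ⟨w, hw⟩
    · simp [he]
    have hwmem := Finset.mem_filter.mp hw
    have hwT := Finset.mem_filter.mp hwmem.1
    obtain ⟨_, hwdvd, hwne, hwabs⟩ := hwT
    set Nb : ℤ := Nf w with hNb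
    have hNfb : ∀ p ∈ T.filter (fun p => proj p = b), Nf p = Nb := by
      intro p hp
      have hp' := Finset.mem_filter.mp hp
      have hpw : proj p = proj w := by rw [hp'.2, hwmem.2]
      simp only [hproj, Prod.mk.injEq] at hpw
      simp only [hNf, hNb, hpw.1, hpw.2.1, hpw.2.2.1, hpw.2.2.2]
    have hNbne : Nb.natAbs ≠ 0 := fun h => hwne (Int.natAbs_eq_zero.mp h)
    have hclaim : (T.filter (fun p => proj p = b)).card ≤ Nb.natAbs.divisors.card := by
      apply Finset.card_le_card_of_injOn (fun p => p.2.2.2.2.natAbs)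
      · intro p hp
        have hp' := Finset.mem_filter.mp hp
        obtain ⟨hpmem, hpdvd, hpne, _⟩ := Finset.mem_filter.mp hp'.1
        rw [Finset.mem_coe, Nat.mem_divisors]
        exact ⟨hNfb p hp ▸ Int.natAbs_dvd_natAbs.mpr hpdvd, hNbne⟩
      · intro p hp q hq hpq
        have hp' := Finset.mem_filter.mp hp
        have hq' := Finset.mem_filter.mp hq
        have hpb : proj p = proj q := by rw [hp'.2, hq'.2]
        have hpFH : p.2.2.2.2 ∈ FH :=
          (Finset.mem_product.mp
            (Finset.mem_product.mp
              (Finset.mem_product.mp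
                (Finset.mem_product.mp (Finset.mem_filter.mp hp'.1).1).2).2).2).2
        have hqFH : q.2.2.2.2 ∈ FH :=
          (Finset.mem_product.mp
            (Finset.mem_product.mp
              (Finset.mem_product.mp
                (Finset.mem_product.mp (Finset.mem_filter.mp hq'.1).1).2).2).2).2
        have hppos : 0 < p.2.2.2.2 := lt_of_lt_of_le hceilH0 (Finset.mem_Ico.mp hpFH).1
        have hqpos : 0 < q.2.2.2.2 := lt_of_lt_of_le hceilH0 (Finset.mem_Ico.mp hqFH).1
        have h5 : p.2.2.2.2 = q.2.2.2.2 := by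
          simp only at hpq
          omega
        simp only [hproj, Prod.mk.injEq] at hpb
        obtain ⟨a1, a2, a3, a4⟩ := hpb
        exact Prod.ext a1 (Prod.ext a2 (Prod.ext a3 (Prod.ext a4 h5)))
    refine le_trans hclaim ?_
    have hub : ((Nb.natAbs : ℕ) : ℝ) ≤ ((4 * ⌈H⌉ * ⌈Q⌉ : ℤ) : ℝ) := by
      have h2' := abs_le.mp hwabs
      have h1 : (Nb.natAbs : ℤ) ≤ 4 * ⌈H⌉ * ⌈Q⌉ := by omega
      calc ((Nb.natAbs : ℕ) : ℝ) = ((Nb.natAbs : ℤ) : ℝ) := (Int.cast_natCast Nb.natAbs).symm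
        _ ≤ _ := Int.cast_le.mpr h1
    have h2 : ((Nb.natAbs.divisors.card : ℕ) : ℝ) ≤ (n₀ : ℝ) := by
      calc ((Nb.natAbs.divisors.card : ℕ) : ℝ) ≤ Cd * (Nb.natAbs : ℝ) ^ ε := hCd _ hNbne
        _ ≤ Cd * (((4 * ⌈H⌉ * ⌈Q⌉ : ℤ) : ℝ)) ^ ε := by
            have := Real.rpow_le_rpow (Nat.cast_nonneg _) hub hε.le
            nlinarith [this, hCd1]
        _ ≤ (n₀ : ℝ) := Nat.le_ceil _
    exact_mod_cast h2
  have hT2 : T.card ≤ n₀ * (T.image proj).card := Finset.card_le_mul_card_image T n₀ hfiber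
  have himg : T.image proj ⊆ FA ×ˢ FD ×ˢ FH ×ˢ FQ := by
    intro b hb
    obtain ⟨p, hp, rfl⟩ := Finset.mem_image.mp hb
    have hpT := (Finset.mem_filter.mp hp).1
    simp only [Finset.mem_product] at hpT ⊢
    exact ⟨hpT.1, hpT.2.1, hpT.2.2.1, hpT.2.2.2.1⟩
  -- card bounds
  have cFA : ((FA.card : ℕ) : ℝ) ≤ 4 * R := by
    rw [hFA, Int.card_Ioo]
    have h1 : (1 : ℤ) ≤ ⌈R⌉ := int_le_ceil 1 R (by push_cast; linarith)
    rw [toNat_cast _ (by omega)]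
    push_cast
    linarith [Int.ceil_lt_add_one R]
  have cFD : ((FD.card : ℕ) : ℝ) ≤ (4 * C + 6) * (Q * δ) := by
    rw [hFD, Int.card_Icc]
    have hM0 : (0 : ℝ) < C * (1 + δ) * Q := by positivity
    have h1 : (0 : ℤ) ≤ ⌈C * (1 + δ) * Q⌉ := le_of_lt (Int.ceil_pos.mpr hM0)
    rw [toNat_cast _ (by omega)]
    push_cast
    have h2 := Int.ceil_lt_add_one (C * (1 + δ) * Q)
    have hQδ : (1 : ℝ) ≤ Q * δ := by nlinarith
    have h4 : C * (1 + δ) * Q ≤ 2 * C * (Q * δ) := by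
      nlinarith [mul_nonneg (mul_nonneg hC.le hQ0.le) (sub_nonneg.mpr hδ)]
    linarith
  have cFH : ((FH.card : ℕ) : ℝ) ≤ 2 * H := by
    rw [hFH, Int.card_Ico]
    have h1 : ⌈H⌉ ≤ ⌈2 * H⌉ := Int.ceil_le_ceil (by linarith)
    rw [toNat_cast _ (by omega)]
    push_cast
    linarith [Int.ceil_lt_add_one (2 * H), Int.le_ceil H]
  have cFQ : ((FQ.card : ℕ) : ℝ) ≤ 6 * Q := by
    rw [hFQ, Int.card_Ioo]
    have h1 : (1 : ℤ) ≤ ⌈2 * Q⌉ := int_le_ceil 1 (2 * Q) (by push_cast; linarith)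
    rw [toNat_cast _ (by omega)]
    push_cast
    linarith [Int.ceil_lt_add_one (2 * Q)]
  -- bound n₀
  have hRQHε : (1 : ℝ) ≤ (R * Q * H) ^ ε := by
    rw [← Real.one_rpow ε]
    exact Real.rpow_le_rpow zero_le_one hRQH1 hε.le
  have hXle : ((4 * ⌈H⌉ * ⌈Q⌉ : ℤ) : ℝ) ≤ 16 * (R * Q * H) := by
    push_cast
    have hh : ((⌈H⌉ : ℤ) : ℝ) ≤ 2 * H := by linarith [Int.ceil_lt_add_one H]
    have hq : ((⌈Q⌉ : ℤ) : ℝ) ≤ 2 * Q := by linarith [Int.ceil_lt_add_one Q]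
    have hhn : (0 : ℝ) ≤ ((⌈H⌉ : ℤ) : ℝ) := by linarith
    have hqn : (0 : ℝ) ≤ ((⌈Q⌉ : ℤ) : ℝ) := by linarith
    nlinarith [mul_le_mul hh hq hqn (by linarith : (0:ℝ) ≤ 2 * H), hR, hQ0, hH0,
      mul_nonneg hQ0.le hH0.le]
  have hn₀b : (n₀ : ℝ) ≤ (Cd * 16 ^ ε + 1) * (R * Q * H) ^ ε := by
    have h1 : (n₀ : ℝ) < Cd * (((4 * ⌈H⌉ * ⌈Q⌉ : ℤ) : ℝ)) ^ ε + 1 :=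
      Nat.ceil_lt_add_one (by positivity)
    have h2 : (((4 * ⌈H⌉ * ⌈Q⌉ : ℤ) : ℝ)) ^ ε ≤ 16 ^ ε * (R * Q * H) ^ ε := by
      rw [← Real.mul_rpow (by norm_num) (by linarith)]
      exact Real.rpow_le_rpow hX0.le hXle hε.le
    nlinarith [h1, h2, hCd1, hRQHε, Real.rpow_nonneg (by norm_num : (0:ℝ) ≤ 16) ε]
  -- final computation
  have hprodcard : (((FA ×ˢ FD ×ˢ FH ×ˢ FQ).card : ℕ) : ℝ) ≤
      (4 * R) * ((4 * C + 6) * (Q * δ)) * (2 * H) * (6 * Q) := by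
    have e : (((FA ×ˢ FD ×ˢ FH ×ˢ FQ).card : ℕ) : ℝ) =
        ((FA.card : ℕ) : ℝ) * ((FD.card : ℕ) : ℝ) * ((FH.card : ℕ) : ℝ) * ((FQ.card : ℕ) : ℝ) := by
      simp only [Finset.card_product]
      push_cast
      ring
    rw [e]
    have b1 : ((FA.card : ℕ) : ℝ) * ((FD.card : ℕ) : ℝ) ≤ (4 * R) * ((4 * C + 6) * (Q * δ)) :=
      mul_le_mul cFA cFD (Nat.cast_nonneg _) (by positivity)
    have b2 : ((FA.card : ℕ) : ℝ) * ((FD.card : ℕ) : ℝ) * ((FH.card : ℕ) : ℝ) ≤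
        (4 * R) * ((4 * C + 6) * (Q * δ)) * (2 * H) :=
      mul_le_mul b1 cFH (Nat.cast_nonneg _) (by positivity)
    exact mul_le_mul b2 cFQ (Nat.cast_nonneg _) (by positivity)
  have hfinal1 : (S.ncard : ℝ) ≤ (n₀ : ℝ) * (((FA ×ˢ FD ×ˢ FH ×ˢ FQ).card : ℕ) : ℝ) := by
    refine le_trans hcard1 ?_
    have : T.card ≤ n₀ * (FA ×ˢ FD ×ˢ FH ×ˢ FQ).card :=
      le_trans hT2 (Nat.mul_le_mul_left n₀ (Finset.card_le_card himg))
    exact_mod_cast this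
  calc (S.ncard : ℝ) ≤ (n₀ : ℝ) * (((FA ×ˢ FD ×ˢ FH ×ˢ FQ).card : ℕ) : ℝ) := hfinal1
    _ ≤ ((Cd * 16 ^ ε + 1) * (R * Q * H) ^ ε) *
        ((4 * R) * ((4 * C + 6) * (Q * δ)) * (2 * H) * (6 * Q)) := by
        refine mul_le_mul hn₀b hprodcard (Nat.cast_nonneg _) ?_
        have : (0:ℝ) ≤ Cd * 16 ^ ε + 1 := by positivity
        have h16 : (0:ℝ) ≤ (R * Q * H) ^ ε := Real.rpow_nonneg (by linarith) ε
        positivity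
    _ = (48 * (4 * C + 6) * (Cd * 16 ^ ε + 1)) * ((R * Q * H) * (R * Q * H) ^ ε) * (Q * δ) := by
        ring
    _ ≤ (48 * (4 * C + 6) * (Cd * 16 ^ ε + 1)) * (R * Q * H) ^ (1 + ε) * (1 + Q * δ) := by
        rw [Real.rpow_add (by linarith : (0:ℝ) < R * Q * H) 1 ε, Real.rpow_one]
        have hQδ : Q * δ ≤ 1 + Q * δ := by linarith
        have hnn : (0 : ℝ) ≤ (48 * (4 * C + 6) * (Cd * 16 ^ ε + 1)) * ((R * Q * H) * (R * Q * H) ^ ε) := by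
          have h16 : (0:ℝ) ≤ 16 ^ (ε:ℝ) := Real.rpow_nonneg (by norm_num) ε
          have h17 : (0:ℝ) ≤ (R * Q * H) ^ (ε:ℝ) := Real.rpow_nonneg (by linarith) ε
          have h18 : (0:ℝ) ≤ Cd * 16 ^ ε + 1 := by
            nlinarith [mul_nonneg (le_trans zero_le_one hCd1) h16]
          have h19 : (0:ℝ) ≤ 48 * (4 * C + 6) := by linarith
          exact mul_nonneg (mul_nonneg (by linarith [mul_nonneg h19 h18] : (0:ℝ) ≤ 48 * (4 * C + 6) * (Cd * 16 ^ ε + 1)) (by linarith : (0:ℝ) ≤ R * Q * H)) h17 |>.trans_eq (by ring)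
        calc (48 * (4 * C + 6) * (Cd * 16 ^ ε + 1)) * ((R * Q * H) * (R * Q * H) ^ ε) * (Q * δ)
            ≤ (48 * (4 * C + 6) * (Cd * 16 ^ ε + 1)) * ((R * Q * H) * (R * Q * H) ^ ε) * (1 + Q * δ) :=
              mul_le_mul_of_nonneg_left hQδ hnn
          _ = (48 * (4 * C + 6) * (Cd * 16 ^ ε + 1)) * ((R * Q * H) * (R * Q * H) ^ ε) * (1 + Q * δ) := rfl
        -- associativity fix
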